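/- Let Γ be a finite group and C = ⊕_{γ∈Γ} C_γ a Γ-graded weakly fusion category such that the identity component C_1 is rigid. Then C is rigid, hence a fusion category. -/

import Mathlib

open CategoryTheory MonoidalCategory

/-- The structure of a monoidal r-category on a monoidal category `C`: for each object `X`
the functor `Y ↦ Hom(𝟙_C, X ⊗ Y)` is representable by an object `dual X`, and the duality
`X ↦ dual X` is an equivalence with inverse `codual`, giving functorial identifications
`Hom(𝟙_C, X ⊗ Y) ≃ Hom(dual X, Y) ≃ Hom(codual Y, X)`. -/
structure RStruct (C : Type*) [Category C] [MonoidalCategory C] where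
  dual : C → C
  codual : C → C
  homEquiv : ∀ X Y : C, (𝟙_ C ⟶ X ⊗ Y) ≃ (dual X ⟶ Y)
  homEquiv_natural : ∀ {X Y Z : C} (g : 𝟙_ C ⟶ X ⊗ Y) (f : Y ⟶ Z),
    homEquiv X Z (g ≫ X ◁ f) = homEquiv X Y g ≫ f
  homEquiv' : ∀ X Y : C, (𝟙_ C ⟶ X ⊗ Y) ≃ (codual Y ⟶ X)
  homEquiv'_natural : ∀ {X Z : C} (Y : C) (g : 𝟙_ C ⟶ X ⊗ Y) (f : X ⟶ Z),
    homEquiv' Z Y (g ≫ f ▷ Y) = homEquiv' X Y g ≫ f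
  codual_dual : ∀ X : C, codual (dual X) = X
  dual_codual : ∀ X : C, dual (codual X) = X

/-- The canonical coevaluation morphism `coev_X : 𝟙_C ⟶ X ⊗ X*` of an object in a monoidal
r-category. -/
def RStruct.coev {C : Type*} [Category C] [MonoidalCategory C]
    (r : RStruct C) (X : C) : 𝟙_ C ⟶ X ⊗ r.dual X :=
  (r.homEquiv X (r.dual X)).symm (𝟙 (r.dual X))

/-! ### Core monoidal construction -/

section Core

variable {C : Type*} [Category C] [MonoidalCategory C]

namespace WfrCore

variable {X B G : C} [ExactPairing G (X ⊗ B)]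

/-- auxiliary map `X ⟶ G ⊗ X` built from the coevaluation of `(G, X ⊗ B)` and `p`. -/
noncomputable def h0 (G : C) [ExactPairing G (X ⊗ B)] (p : B ⊗ X ⟶ 𝟙_ C) : X ⟶ G ⊗ X :=
  (λ_ X).inv ≫ η_ G (X ⊗ B) ▷ X ≫ (α_ G (X ⊗ B) X).hom ≫
    G ◁ ((α_ X B X).hom ≫ X ◁ p ≫ (ρ_ X).hom)

/-- candidate coevaluation for the pairing `(B ⊗ G, X)`. -/
noncomputable def cv (G : C) [ExactPairing G (X ⊗ B)] (c : 𝟙_ C ⟶ B ⊗ X) (p : B ⊗ X ⟶ 𝟙_ C) : 𝟙_ C ⟶ (B ⊗ G) ⊗ X :=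
  c ≫ B ◁ h0 G p ≫ (α_ B G X).inv

/-- candidate evaluation for the pairing `(B ⊗ G, X)`. -/
noncomputable def ev' (X B G : C) [ExactPairing G (X ⊗ B)] : X ⊗ (B ⊗ G) ⟶ 𝟙_ C :=
  (α_ X B G).inv ≫ ε_ G (X ⊗ B)

theorem L1 (c : 𝟙_ C ⟶ B ⊗ X) (p : B ⊗ X ⟶ 𝟙_ C) (hcp : c ≫ p = 𝟙 (𝟙_ C)) :
    X ◁ cv G c p ≫ (α_ X (B ⊗ G) X).inv ≫ (ev' X B G) ▷ X =
      (ρ_ X).hom ≫ (λ_ X).inv := by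
  calc X ◁ cv G c p ≫ (α_ X (B ⊗ G) X).inv ≫ (ev' X B G) ▷ X
      = 𝟙 _ ⊗≫ X ◁ c ⊗≫ (X ⊗ B) ◁ (η_ G (X ⊗ B) ▷ X) ⊗≫
          (((X ⊗ B) ⊗ G) ◁ ((α_ X B X).hom ≫ X ◁ p ≫ (ρ_ X).hom)
            ≫ ε_ G (X ⊗ B) ▷ X) ⊗≫ 𝟙 _ := by
        dsimp only [cv, ev', h0]; monoidal
    _ = 𝟙 _ ⊗≫ X ◁ c ⊗≫ (X ⊗ B) ◁ (η_ G (X ⊗ B) ▷ X) ⊗≫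
          (ε_ G (X ⊗ B) ▷ ((X ⊗ B) ⊗ X)
            ≫ 𝟙_ C ◁ ((α_ X B X).hom ≫ X ◁ p ≫ (ρ_ X).hom)) ⊗≫ 𝟙 _ := by
        rw [← whisker_exchange]
    _ = 𝟙 _ ⊗≫ X ◁ c ⊗≫
          (((X ⊗ B) ◁ η_ G (X ⊗ B) ≫ (α_ (X ⊗ B) G (X ⊗ B)).inv
              ≫ ε_ G (X ⊗ B) ▷ (X ⊗ B)) ▷ X) ⊗≫ X ◁ p ⊗≫ 𝟙 _ := by
        monoidal
    _ = 𝟙 _ ⊗≫ X ◁ c ⊗≫ (((ρ_ (X ⊗ B)).hom ≫ (λ_ (X ⊗ B)).inv) ▷ X) ⊗≫ X ◁ p ⊗≫ 𝟙 _ := by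
        rw [ExactPairing.coevaluation_evaluation]
    _ = 𝟙 _ ⊗≫ X ◁ (c ≫ p) ⊗≫ 𝟙 _ := by monoidal
    _ = (ρ_ X).hom ≫ (λ_ X).inv := by rw [hcp]; monoidal

end WfrCore

end Core

namespace WfrCore

variable {C : Type*} [Category C] [MonoidalCategory C]
variable {X B G : C} [ExactPairing G (X ⊗ B)]

/-- the candidate "other zigzag" endomorphism of `B ⊗ G`. -/
noncomputable def vv (G : C) [ExactPairing G (X ⊗ B)] (c : 𝟙_ C ⟶ B ⊗ X) (p : B ⊗ X ⟶ 𝟙_ C) : B ⊗ G ⟶ B ⊗ G :=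
  (λ_ (B ⊗ G)).inv ≫ cv G c p ▷ (B ⊗ G) ≫ (α_ (B ⊗ G) X (B ⊗ G)).hom ≫
    (B ⊗ G) ◁ ev' X B G ≫ (ρ_ (B ⊗ G)).hom

theorem vv_def (c : 𝟙_ C ⟶ B ⊗ X) (p : B ⊗ X ⟶ 𝟙_ C) :
    vv G c p = (λ_ (B ⊗ G)).inv ≫ cv G c p ▷ (B ⊗ G) ≫ (α_ (B ⊗ G) X (B ⊗ G)).hom ≫
      (B ⊗ G) ◁ ev' X B G ≫ (ρ_ (B ⊗ G)).hom := rfl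

theorem beta' (c : 𝟙_ C ⟶ B ⊗ X) (p : B ⊗ X ⟶ 𝟙_ C) (hcp : c ≫ p = 𝟙 (𝟙_ C)) :
    X ◁ vv G c p ≫ ev' X B G = ev' X B G := by
  calc X ◁ vv G c p ≫ ev' X B G
      = 𝟙 _ ⊗≫ X ◁ (cv G c p ▷ (B ⊗ G)) ⊗≫
          ((X ⊗ (B ⊗ G)) ◁ ev' X B G ≫ ev' X B G ▷ 𝟙_ C) ⊗≫ 𝟙 _ := by
        dsimp only [vv]; monoidal
    _ = 𝟙 _ ⊗≫ X ◁ (cv G c p ▷ (B ⊗ G)) ⊗≫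
          (ev' X B G ▷ (X ⊗ (B ⊗ G)) ≫ 𝟙_ C ◁ ev' X B G) ⊗≫ 𝟙 _ := by
        rw [whisker_exchange]
    _ = 𝟙 _ ⊗≫ ((X ◁ cv G c p ≫ (α_ X (B ⊗ G) X).inv ≫ ev' X B G ▷ X) ▷ (B ⊗ G)) ⊗≫
          ev' X B G ⊗≫ 𝟙 _ := by
        monoidal
    _ = 𝟙 _ ⊗≫ (((ρ_ X).hom ≫ (λ_ X).inv) ▷ (B ⊗ G)) ⊗≫ ev' X B G ⊗≫ 𝟙 _ := by
        rw [L1 c p hcp]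
    _ = ev' X B G := by monoidal

theorem vv_idem (c : 𝟙_ C ⟶ B ⊗ X) (p : B ⊗ X ⟶ 𝟙_ C) (hcp : c ≫ p = 𝟙 (𝟙_ C)) :
    vv G c p ≫ vv G c p = vv (X := X) G c p := by
  nth_rewrite 2 [vv_def]
  calc vv G c p ≫ (λ_ (B ⊗ G)).inv ≫ cv G c p ▷ (B ⊗ G) ≫ (α_ (B ⊗ G) X (B ⊗ G)).hom ≫
        (B ⊗ G) ◁ ev' X B G ≫ (ρ_ (B ⊗ G)).hom
      = 𝟙 _ ⊗≫ (𝟙_ C ◁ vv G c p ≫ cv G c p ▷ (B ⊗ G)) ⊗≫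
          (B ⊗ G) ◁ ev' X B G ⊗≫ 𝟙 _ := by
        monoidal
    _ = 𝟙 _ ⊗≫ (cv G c p ▷ (B ⊗ G) ≫ ((B ⊗ G) ⊗ X) ◁ vv G c p) ⊗≫
          (B ⊗ G) ◁ ev' X B G ⊗≫ 𝟙 _ := by
        rw [← whisker_exchange]
    _ = 𝟙 _ ⊗≫ cv G c p ▷ (B ⊗ G) ⊗≫
          (B ⊗ G) ◁ (X ◁ vv G c p ≫ ev' X B G) ⊗≫ 𝟙 _ := by
        monoidal
    _ = vv G c p := by
        rw [beta' c p hcp]; dsimp only [vv]; monoidal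

end WfrCore

theorem wfr_core_left {C : Type*} [Category C] [MonoidalCategory C] [IsIdempotentComplete C]
    {X B G : C} (E : ExactPairing G (X ⊗ B))
    (c : 𝟙_ C ⟶ B ⊗ X) (p : B ⊗ X ⟶ 𝟙_ C) (hcp : c ≫ p = 𝟙 (𝟙_ C)) :
    ∃ Y : C, Nonempty (ExactPairing Y X) := by
  obtain ⟨Y, i, e, hie, hei⟩ :=
    IsIdempotentComplete.idempotents_split (B ⊗ G) (WfrCore.vv G c p)
      (WfrCore.vv_idem c p hcp)
  have hive : i ≫ WfrCore.vv G c p ≫ e = 𝟙 Y := by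
    rw [← hei]
    slice_lhs 1 2 => rw [hie]
    rw [Category.id_comp, hie]
  refine ⟨Y, ⟨{ coevaluation' := WfrCore.cv G c p ≫ e ▷ X
                evaluation' := X ◁ i ≫ WfrCore.ev' X B G
                coevaluation_evaluation' := ?_
                evaluation_coevaluation' := ?_ }⟩⟩
  · calc X ◁ (WfrCore.cv G c p ≫ e ▷ X) ≫ (α_ X Y X).inv ≫
          ((X ◁ i ≫ WfrCore.ev' X B G) ▷ X)
        = X ◁ WfrCore.cv G c p ≫ (α_ X (B ⊗ G) X).inv ≫
            ((X ◁ (e ≫ i) ≫ WfrCore.ev' X B G) ▷ X) := by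
          simp only [MonoidalCategory.whiskerLeft_comp, comp_whiskerRight, Category.assoc]
          rw [associator_inv_naturality_middle_assoc]
      _ = X ◁ WfrCore.cv G c p ≫ (α_ X (B ⊗ G) X).inv ≫ (WfrCore.ev' X B G ▷ X) := by
          rw [hei, WfrCore.beta' c p hcp]
      _ = (ρ_ X).hom ≫ (λ_ X).inv := WfrCore.L1 c p hcp
  · calc (WfrCore.cv G c p ≫ e ▷ X) ▷ Y ≫ (α_ Y X Y).hom ≫
          Y ◁ (X ◁ i ≫ WfrCore.ev' X B G)
        = 𝟙 _ ⊗≫ ((WfrCore.cv G c p ≫ e ▷ X) ▷ Y ≫ (Y ⊗ X) ◁ i) ⊗≫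
            Y ◁ WfrCore.ev' X B G ⊗≫ 𝟙 _ := by
          monoidal
      _ = 𝟙 _ ⊗≫ (𝟙_ C ◁ i ≫ (WfrCore.cv G c p ≫ e ▷ X) ▷ (B ⊗ G)) ⊗≫
            Y ◁ WfrCore.ev' X B G ⊗≫ 𝟙 _ := by
          rw [← whisker_exchange]
      _ = 𝟙 _ ⊗≫ 𝟙_ C ◁ i ⊗≫ WfrCore.cv G c p ▷ (B ⊗ G) ⊗≫
            (e ▷ (X ⊗ (B ⊗ G)) ≫ Y ◁ WfrCore.ev' X B G) ⊗≫ 𝟙 _ := by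
          monoidal
      _ = 𝟙 _ ⊗≫ 𝟙_ C ◁ i ⊗≫ WfrCore.cv G c p ▷ (B ⊗ G) ⊗≫
            ((B ⊗ G) ◁ WfrCore.ev' X B G ≫ e ▷ 𝟙_ C) ⊗≫ 𝟙 _ := by
          rw [← whisker_exchange]
      _ = (λ_ Y).hom ≫ (i ≫ WfrCore.vv G c p ≫ e) ≫ (ρ_ Y).inv := by
          dsimp only [WfrCore.vv]; monoidal
      _ = (λ_ Y).hom ≫ (ρ_ Y).inv := by rw [hive, Category.id_comp]

namespace WfrCoreR

variable {C : Type*} [Category C] [MonoidalCategory C]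
variable {X N : C}

noncomputable def h0 (G : C) [ExactPairing (N ⊗ X) G] (q : X ⊗ N ⟶ 𝟙_ C) : X ⟶ X ⊗ G :=
  (ρ_ X).inv ≫ X ◁ η_ (N ⊗ X) G ≫ (α_ X (N ⊗ X) G).inv ≫
    ((α_ X N X).inv ≫ q ▷ X ≫ (λ_ X).hom) ▷ G

noncomputable def cv (G : C) [ExactPairing (N ⊗ X) G] (c : 𝟙_ C ⟶ X ⊗ N)
    (q : X ⊗ N ⟶ 𝟙_ C) : 𝟙_ C ⟶ X ⊗ (G ⊗ N) :=
  c ≫ h0 G q ▷ N ≫ (α_ X G N).hom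

noncomputable def ev' (X N G : C) [ExactPairing (N ⊗ X) G] : (G ⊗ N) ⊗ X ⟶ 𝟙_ C :=
  (α_ G N X).hom ≫ ε_ (N ⊗ X) G

theorem L1 (G : C) [ExactPairing (N ⊗ X) G] (c : 𝟙_ C ⟶ X ⊗ N) (q : X ⊗ N ⟶ 𝟙_ C)
    (hcq : c ≫ q = 𝟙 (𝟙_ C)) :
    cv G c q ▷ X ≫ (α_ X (G ⊗ N) X).hom ≫ X ◁ ev' X N G = (λ_ X).hom ≫ (ρ_ X).inv := by
  calc cv G c q ▷ X ≫ (α_ X (G ⊗ N) X).hom ≫ X ◁ ev' X N G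
      = 𝟙 _ ⊗≫ c ▷ X ⊗≫ (X ◁ η_ (N ⊗ X) G) ▷ (N ⊗ X) ⊗≫
          (((α_ X N X).inv ≫ q ▷ X ≫ (λ_ X).hom) ▷ (G ⊗ (N ⊗ X))
            ≫ X ◁ ε_ (N ⊗ X) G) ⊗≫ 𝟙 _ := by
        dsimp only [cv, ev', h0]; monoidal
    _ = 𝟙 _ ⊗≫ c ▷ X ⊗≫ (X ◁ η_ (N ⊗ X) G) ▷ (N ⊗ X) ⊗≫
          ((X ⊗ (N ⊗ X)) ◁ ε_ (N ⊗ X) G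
            ≫ ((α_ X N X).inv ≫ q ▷ X ≫ (λ_ X).hom) ▷ 𝟙_ C) ⊗≫ 𝟙 _ := by
        rw [← whisker_exchange]
    _ = 𝟙 _ ⊗≫ c ▷ X ⊗≫
          (X ◁ (η_ (N ⊗ X) G ▷ (N ⊗ X) ≫ (α_ (N ⊗ X) G (N ⊗ X)).hom
            ≫ (N ⊗ X) ◁ ε_ (N ⊗ X) G)) ⊗≫ q ▷ X ⊗≫ 𝟙 _ := by
        monoidal
    _ = 𝟙 _ ⊗≫ c ▷ X ⊗≫ (X ◁ ((λ_ (N ⊗ X)).hom ≫ (ρ_ (N ⊗ X)).inv)) ⊗≫ q ▷ X ⊗≫ 𝟙 _ := by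
        rw [ExactPairing.evaluation_coevaluation]
    _ = 𝟙 _ ⊗≫ (c ≫ q) ▷ X ⊗≫ 𝟙 _ := by monoidal
    _ = (λ_ X).hom ≫ (ρ_ X).inv := by rw [hcq]; monoidal

noncomputable def vv (G : C) [ExactPairing (N ⊗ X) G] (c : 𝟙_ C ⟶ X ⊗ N)
    (q : X ⊗ N ⟶ 𝟙_ C) : G ⊗ N ⟶ G ⊗ N :=
  (ρ_ (G ⊗ N)).inv ≫ ((G ⊗ N : C)) ◁ cv G c q ≫ (α_ (G ⊗ N) X (G ⊗ N)).inv ≫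
    ev' X N G ▷ (G ⊗ N) ≫ (λ_ (G ⊗ N)).hom

theorem vv_def (G : C) [ExactPairing (N ⊗ X) G] (c : 𝟙_ C ⟶ X ⊗ N) (q : X ⊗ N ⟶ 𝟙_ C) :
    vv G c q = (ρ_ (G ⊗ N)).inv ≫ ((G ⊗ N : C)) ◁ cv G c q ≫ (α_ (G ⊗ N) X (G ⊗ N)).inv ≫
      ev' X N G ▷ (G ⊗ N) ≫ (λ_ (G ⊗ N)).hom := rfl

theorem beta' (G : C) [ExactPairing (N ⊗ X) G] (c : 𝟙_ C ⟶ X ⊗ N) (q : X ⊗ N ⟶ 𝟙_ C)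
    (hcq : c ≫ q = 𝟙 (𝟙_ C)) :
    vv G c q ▷ X ≫ ev' X N G = ev' X N G := by
  calc vv G c q ▷ X ≫ ev' X N G
      = 𝟙 _ ⊗≫ (((G ⊗ N : C)) ◁ cv G c q) ▷ X ⊗≫
          (ev' X N G ▷ ((G ⊗ N) ⊗ X) ≫ 𝟙_ C ◁ ev' X N G) ⊗≫ 𝟙 _ := by
        dsimp only [vv]; monoidal
    _ = 𝟙 _ ⊗≫ (((G ⊗ N : C)) ◁ cv G c q) ▷ X ⊗≫
          (((G ⊗ N) ⊗ X) ◁ ev' X N G ≫ ev' X N G ▷ 𝟙_ C) ⊗≫ 𝟙 _ := by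
        rw [whisker_exchange]
    _ = 𝟙 _ ⊗≫ (((G ⊗ N : C)) ◁ (cv G c q ▷ X ≫ (α_ X (G ⊗ N) X).hom ≫ X ◁ ev' X N G)) ⊗≫
          ev' X N G ⊗≫ 𝟙 _ := by
        monoidal
    _ = 𝟙 _ ⊗≫ (((G ⊗ N : C)) ◁ ((λ_ X).hom ≫ (ρ_ X).inv)) ⊗≫ ev' X N G ⊗≫ 𝟙 _ := by
        rw [L1 G c q hcq]
    _ = ev' X N G := by monoidal

theorem vv_idem (G : C) [ExactPairing (N ⊗ X) G] (c : 𝟙_ C ⟶ X ⊗ N) (q : X ⊗ N ⟶ 𝟙_ C)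
    (hcq : c ≫ q = 𝟙 (𝟙_ C)) :
    vv G c q ≫ vv G c q = vv G c q := by
  nth_rewrite 2 [vv_def]
  calc vv G c q ≫ (ρ_ (G ⊗ N)).inv ≫ ((G ⊗ N : C)) ◁ cv G c q ≫ (α_ (G ⊗ N) X (G ⊗ N)).inv ≫
        ev' X N G ▷ (G ⊗ N) ≫ (λ_ (G ⊗ N)).hom
      = 𝟙 _ ⊗≫ (vv G c q ▷ 𝟙_ C ≫ ((G ⊗ N : C)) ◁ cv G c q) ⊗≫
          ev' X N G ▷ (G ⊗ N) ⊗≫ 𝟙 _ := by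
        monoidal
    _ = 𝟙 _ ⊗≫ (((G ⊗ N : C)) ◁ cv G c q ≫ vv G c q ▷ (X ⊗ (G ⊗ N))) ⊗≫
          ev' X N G ▷ (G ⊗ N) ⊗≫ 𝟙 _ := by
        rw [whisker_exchange]
    _ = 𝟙 _ ⊗≫ ((G ⊗ N : C)) ◁ cv G c q ⊗≫
          ((vv G c q ▷ X ≫ ev' X N G) ▷ (G ⊗ N)) ⊗≫ 𝟙 _ := by
        monoidal
    _ = vv G c q := by
        rw [beta' G c q hcq]; dsimp only [vv]; monoidal

end WfrCoreR

theorem wfr_core_right {C : Type*} [Category C] [MonoidalCategory C] [IsIdempotentComplete C]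
    {X N G : C} (E : ExactPairing (N ⊗ X) G)
    (c : 𝟙_ C ⟶ X ⊗ N) (q : X ⊗ N ⟶ 𝟙_ C) (hcq : c ≫ q = 𝟙 (𝟙_ C)) :
    ∃ Y : C, Nonempty (ExactPairing X Y) := by
  obtain ⟨Y, i, e, hie, hei⟩ :=
    IsIdempotentComplete.idempotents_split (G ⊗ N) (WfrCoreR.vv G c q)
      (WfrCoreR.vv_idem G c q hcq)
  have hive : i ≫ WfrCoreR.vv G c q ≫ e = 𝟙 Y := by
    rw [← hei]
    slice_lhs 1 2 => rw [hie]
    rw [Category.id_comp, hie]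
  refine ⟨Y, ⟨{ coevaluation' := WfrCoreR.cv G c q ≫ X ◁ e
                evaluation' := i ▷ X ≫ WfrCoreR.ev' X N G
                coevaluation_evaluation' := ?_
                evaluation_coevaluation' := ?_ }⟩⟩
  · calc Y ◁ (WfrCoreR.cv G c q ≫ X ◁ e) ≫ (α_ Y X Y).inv ≫
          ((i ▷ X ≫ WfrCoreR.ev' X N G) ▷ Y)
        = 𝟙 _ ⊗≫ (Y ◁ (WfrCoreR.cv G c q ≫ X ◁ e) ≫ i ▷ (X ⊗ Y)) ⊗≫
            WfrCoreR.ev' X N G ▷ Y ⊗≫ 𝟙 _ := by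
          monoidal
      _ = 𝟙 _ ⊗≫ (i ▷ 𝟙_ C ≫ ((G ⊗ N : C)) ◁ (WfrCoreR.cv G c q ≫ X ◁ e)) ⊗≫
            WfrCoreR.ev' X N G ▷ Y ⊗≫ 𝟙 _ := by
          rw [whisker_exchange]
      _ = 𝟙 _ ⊗≫ i ▷ 𝟙_ C ⊗≫ ((G ⊗ N : C)) ◁ WfrCoreR.cv G c q ⊗≫
            ((((G ⊗ N) ⊗ X : C)) ◁ e ≫ WfrCoreR.ev' X N G ▷ Y) ⊗≫ 𝟙 _ := by
          monoidal
      _ = 𝟙 _ ⊗≫ i ▷ 𝟙_ C ⊗≫ ((G ⊗ N : C)) ◁ WfrCoreR.cv G c q ⊗≫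
            (WfrCoreR.ev' X N G ▷ (G ⊗ N) ≫ 𝟙_ C ◁ e) ⊗≫ 𝟙 _ := by
          rw [whisker_exchange]
      _ = (ρ_ Y).hom ≫ (i ≫ WfrCoreR.vv G c q ≫ e) ≫ (λ_ Y).inv := by
          dsimp only [WfrCoreR.vv]; monoidal
      _ = (ρ_ Y).hom ≫ (λ_ Y).inv := by rw [hive, Category.id_comp]
  · calc (WfrCoreR.cv G c q ≫ X ◁ e) ▷ X ≫ (α_ X Y X).hom ≫
          X ◁ (i ▷ X ≫ WfrCoreR.ev' X N G)
        = WfrCoreR.cv G c q ▷ X ≫ (α_ X (G ⊗ N) X).hom ≫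
            X ◁ ((e ≫ i) ▷ X ≫ WfrCoreR.ev' X N G) := by
          simp only [MonoidalCategory.whiskerLeft_comp, comp_whiskerRight, Category.assoc]
          rw [associator_naturality_middle_assoc]
      _ = WfrCoreR.cv G c q ▷ X ≫ (α_ X (G ⊗ N) X).hom ≫ X ◁ WfrCoreR.ev' X N G := by
          rw [hei, WfrCoreR.beta' G c q hcq]
      _ = (λ_ X).hom ≫ (ρ_ X).inv := WfrCoreR.L1 G c q hcq

/-! ### Pairings of biproducts -/

section PairSum

variable {C : Type*} [Category C] [MonoidalCategory C]

theorem pairSum_term1 {X₁ Y₁ X₂ Y₂ Xs Ys : C} [ExactPairing X₁ Y₁] [ExactPairing X₂ Y₂]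
    (a : X₁ ⟶ Xs) (b : Y₁ ⟶ Ys) (f : Ys ⟶ Y₂) (u : Xs ⟶ X₂) :
    Ys ◁ (η_ X₁ Y₁ ≫ (a ⊗ₘ b)) ≫ (α_ Ys Xs Ys).inv ≫ (((f ⊗ₘ u) ≫ ε_ X₂ Y₂) ▷ Ys) =
      f ▷ 𝟙_ C ≫ (Y₂ ◁ (η_ X₁ Y₁ ≫ (a ≫ u) ▷ Y₁) ≫ (α_ Y₂ X₂ Y₁).inv ≫ ε_ X₂ Y₂ ▷ Y₁) ≫
        𝟙_ C ◁ b := by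
  calc Ys ◁ (η_ X₁ Y₁ ≫ (a ⊗ₘ b)) ≫ (α_ Ys Xs Ys).inv ≫ (((f ⊗ₘ u) ≫ ε_ X₂ Y₂) ▷ Ys)
      = 𝟙 _ ⊗≫ Ys ◁ (η_ X₁ Y₁ ≫ a ▷ Y₁) ⊗≫
          (((Ys ⊗ Xs : C)) ◁ b ≫ (f ▷ Xs ≫ Y₂ ◁ u ≫ ε_ X₂ Y₂) ▷ Ys) ⊗≫ 𝟙 _ := by
        rw [tensorHom_def a b, tensorHom_def f u]; monoidal
    _ = 𝟙 _ ⊗≫ Ys ◁ (η_ X₁ Y₁ ≫ a ▷ Y₁) ⊗≫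
          ((f ▷ Xs ≫ Y₂ ◁ u ≫ ε_ X₂ Y₂) ▷ Y₁ ≫ 𝟙_ C ◁ b) ⊗≫ 𝟙 _ := by
        rw [whisker_exchange]
    _ = 𝟙 _ ⊗≫ (Ys ◁ (η_ X₁ Y₁ ≫ a ▷ Y₁) ≫ f ▷ ((Xs ⊗ Y₁ : C))) ⊗≫
          ((Y₂ ◁ u ≫ ε_ X₂ Y₂) ▷ Y₁ ≫ 𝟙_ C ◁ b) ⊗≫ 𝟙 _ := by
        monoidal
    _ = 𝟙 _ ⊗≫ (f ▷ 𝟙_ C ≫ Y₂ ◁ (η_ X₁ Y₁ ≫ a ▷ Y₁)) ⊗≫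
          ((Y₂ ◁ u ≫ ε_ X₂ Y₂) ▷ Y₁ ≫ 𝟙_ C ◁ b) ⊗≫ 𝟙 _ := by
        rw [whisker_exchange]
    _ = 𝟙 _ ⊗≫ f ▷ 𝟙_ C ⊗≫ Y₂ ◁ (η_ X₁ Y₁ ≫ (a ▷ Y₁ ≫ u ▷ Y₁)) ⊗≫
          ε_ X₂ Y₂ ▷ Y₁ ⊗≫ 𝟙_ C ◁ b ⊗≫ 𝟙 _ := by
        monoidal
    _ = 𝟙 _ ⊗≫ f ▷ 𝟙_ C ⊗≫ Y₂ ◁ (η_ X₁ Y₁ ≫ (a ≫ u) ▷ Y₁) ⊗≫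
          ε_ X₂ Y₂ ▷ Y₁ ⊗≫ 𝟙_ C ◁ b ⊗≫ 𝟙 _ := by
        rw [← comp_whiskerRight]
    _ = f ▷ 𝟙_ C ≫ (Y₂ ◁ (η_ X₁ Y₁ ≫ (a ≫ u) ▷ Y₁) ≫ (α_ Y₂ X₂ Y₁).inv ≫ ε_ X₂ Y₂ ▷ Y₁) ≫
          𝟙_ C ◁ b := by
        monoidal

theorem pairSum_term2 {X₁ Y₁ X₂ Y₂ Xs Ys : C} [ExactPairing X₁ Y₁] [ExactPairing X₂ Y₂]
    (a : X₁ ⟶ Xs) (b : Y₁ ⟶ Ys) (f : Ys ⟶ Y₂) (u : Xs ⟶ X₂) :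
    (η_ X₁ Y₁ ≫ (a ⊗ₘ b)) ▷ Xs ≫ (α_ Xs Ys Xs).hom ≫ Xs ◁ ((f ⊗ₘ u) ≫ ε_ X₂ Y₂) =
      𝟙_ C ◁ u ≫ ((η_ X₁ Y₁ ≫ X₁ ◁ (b ≫ f)) ▷ X₂ ≫ (α_ X₁ Y₂ X₂).hom ≫ X₁ ◁ ε_ X₂ Y₂) ≫
        a ▷ 𝟙_ C := by
  calc (η_ X₁ Y₁ ≫ (a ⊗ₘ b)) ▷ Xs ≫ (α_ Xs Ys Xs).hom ≫ Xs ◁ ((f ⊗ₘ u) ≫ ε_ X₂ Y₂)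
      = 𝟙 _ ⊗≫ (η_ X₁ Y₁ ≫ X₁ ◁ b) ▷ Xs ⊗≫
          (a ▷ ((Ys ⊗ Xs : C)) ≫ Xs ◁ (Ys ◁ u ≫ f ▷ X₂ ≫ ε_ X₂ Y₂)) ⊗≫ 𝟙 _ := by
        rw [tensorHom_def' a b, tensorHom_def' f u]; monoidal
    _ = 𝟙 _ ⊗≫ (η_ X₁ Y₁ ≫ X₁ ◁ b) ▷ Xs ⊗≫
          (X₁ ◁ (Ys ◁ u ≫ f ▷ X₂ ≫ ε_ X₂ Y₂) ≫ a ▷ 𝟙_ C) ⊗≫ 𝟙 _ := by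
        rw [← whisker_exchange]
    _ = 𝟙 _ ⊗≫ ((η_ X₁ Y₁ ≫ X₁ ◁ b) ▷ Xs ≫ ((X₁ ⊗ Ys : C)) ◁ u) ⊗≫
          (X₁ ◁ (f ▷ X₂ ≫ ε_ X₂ Y₂) ≫ a ▷ 𝟙_ C) ⊗≫ 𝟙 _ := by
        monoidal
    _ = 𝟙 _ ⊗≫ (𝟙_ C ◁ u ≫ (η_ X₁ Y₁ ≫ X₁ ◁ b) ▷ X₂) ⊗≫
          (X₁ ◁ (f ▷ X₂ ≫ ε_ X₂ Y₂) ≫ a ▷ 𝟙_ C) ⊗≫ 𝟙 _ := by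
        rw [← whisker_exchange]
    _ = 𝟙 _ ⊗≫ 𝟙_ C ◁ u ⊗≫ (η_ X₁ Y₁ ≫ (X₁ ◁ b ≫ X₁ ◁ f)) ▷ X₂ ⊗≫
          X₁ ◁ ε_ X₂ Y₂ ⊗≫ a ▷ 𝟙_ C ⊗≫ 𝟙 _ := by
        monoidal
    _ = 𝟙 _ ⊗≫ 𝟙_ C ◁ u ⊗≫ (η_ X₁ Y₁ ≫ X₁ ◁ (b ≫ f)) ▷ X₂ ⊗≫
          X₁ ◁ ε_ X₂ Y₂ ⊗≫ a ▷ 𝟙_ C ⊗≫ 𝟙 _ := by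
        rw [← MonoidalCategory.whiskerLeft_comp]
    _ = 𝟙_ C ◁ u ≫ ((η_ X₁ Y₁ ≫ X₁ ◁ (b ≫ f)) ▷ X₂ ≫ (α_ X₁ Y₂ X₂).hom ≫ X₁ ◁ ε_ X₂ Y₂) ≫
          a ▷ 𝟙_ C := by
        monoidal

end PairSum

section PairSum2

variable {C : Type*} [Category C] [MonoidalCategory C] [Preadditive C] [MonoidalPreadditive C]
  [Limits.HasBinaryBiproducts C]

open Limits

noncomputable def pairSum (X₁ Y₁ X₂ Y₂ : C) [ExactPairing X₁ Y₁] [ExactPairing X₂ Y₂] :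
    ExactPairing (X₁ ⊞ X₂) (Y₁ ⊞ Y₂) where
  coevaluation' :=
    η_ X₁ Y₁ ≫ ((biprod.inl : X₁ ⟶ X₁ ⊞ X₂) ⊗ₘ (biprod.inl : Y₁ ⟶ Y₁ ⊞ Y₂)) +
    η_ X₂ Y₂ ≫ ((biprod.inr : X₂ ⟶ X₁ ⊞ X₂) ⊗ₘ (biprod.inr : Y₂ ⟶ Y₁ ⊞ Y₂))
  evaluation' :=
    ((biprod.fst : Y₁ ⊞ Y₂ ⟶ Y₁) ⊗ₘ (biprod.fst : X₁ ⊞ X₂ ⟶ X₁)) ≫ ε_ X₁ Y₁ +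
    ((biprod.snd : Y₁ ⊞ Y₂ ⟶ Y₂) ⊗ₘ (biprod.snd : X₁ ⊞ X₂ ⟶ X₂)) ≫ ε_ X₂ Y₂
  coevaluation_evaluation' := by
    simp only [MonoidalPreadditive.whiskerLeft_add, MonoidalPreadditive.add_whiskerRight,
      Preadditive.add_comp, Preadditive.comp_add]
    rw [pairSum_term1 (biprod.inl : X₁ ⟶ X₁ ⊞ X₂) (biprod.inl : Y₁ ⟶ Y₁ ⊞ Y₂)
        (biprod.fst : Y₁ ⊞ Y₂ ⟶ Y₁) (biprod.fst : X₁ ⊞ X₂ ⟶ X₁),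
      pairSum_term1 (biprod.inl : X₁ ⟶ X₁ ⊞ X₂) (biprod.inl : Y₁ ⟶ Y₁ ⊞ Y₂)
        (biprod.snd : Y₁ ⊞ Y₂ ⟶ Y₂) (biprod.snd : X₁ ⊞ X₂ ⟶ X₂),
      pairSum_term1 (biprod.inr : X₂ ⟶ X₁ ⊞ X₂) (biprod.inr : Y₂ ⟶ Y₁ ⊞ Y₂)
        (biprod.fst : Y₁ ⊞ Y₂ ⟶ Y₁) (biprod.fst : X₁ ⊞ X₂ ⟶ X₁),
      pairSum_term1 (biprod.inr : X₂ ⟶ X₁ ⊞ X₂) (biprod.inr : Y₂ ⟶ Y₁ ⊞ Y₂)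
        (biprod.snd : Y₁ ⊞ Y₂ ⟶ Y₂) (biprod.snd : X₁ ⊞ X₂ ⟶ X₂)]
    simp only [biprod.inl_fst, biprod.inl_snd, biprod.inr_fst, biprod.inr_snd,
      MonoidalPreadditive.zero_whiskerRight, comp_zero, zero_comp,
      MonoidalPreadditive.whiskerLeft_zero, add_zero, zero_add,
      id_whiskerRight, Category.comp_id, Category.id_comp]
    rw [ExactPairing.coevaluation_evaluation, ExactPairing.coevaluation_evaluation]
    trans (ρ_ (Y₁ ⊞ Y₂)).hom ≫
      (biprod.fst ≫ biprod.inl + biprod.snd ≫ biprod.inr) ≫ (λ_ (Y₁ ⊞ Y₂)).inv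
    · simp only [MonoidalCategory.whiskerRight_id, MonoidalCategory.id_whiskerLeft,
        Category.assoc, Iso.inv_hom_id_assoc, Iso.hom_inv_id_assoc,
        Preadditive.add_comp, Preadditive.comp_add]
    · rw [biprod.total]; simp
  evaluation_coevaluation' := by
    simp only [MonoidalPreadditive.whiskerLeft_add, MonoidalPreadditive.add_whiskerRight,
      Preadditive.add_comp, Preadditive.comp_add]
    rw [pairSum_term2 (biprod.inl : X₁ ⟶ X₁ ⊞ X₂) (biprod.inl : Y₁ ⟶ Y₁ ⊞ Y₂)
        (biprod.fst : Y₁ ⊞ Y₂ ⟶ Y₁) (biprod.fst : X₁ ⊞ X₂ ⟶ X₁),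
      pairSum_term2 (biprod.inl : X₁ ⟶ X₁ ⊞ X₂) (biprod.inl : Y₁ ⟶ Y₁ ⊞ Y₂)
        (biprod.snd : Y₁ ⊞ Y₂ ⟶ Y₂) (biprod.snd : X₁ ⊞ X₂ ⟶ X₂),
      pairSum_term2 (biprod.inr : X₂ ⟶ X₁ ⊞ X₂) (biprod.inr : Y₂ ⟶ Y₁ ⊞ Y₂)
        (biprod.fst : Y₁ ⊞ Y₂ ⟶ Y₁) (biprod.fst : X₁ ⊞ X₂ ⟶ X₁),
      pairSum_term2 (biprod.inr : X₂ ⟶ X₁ ⊞ X₂) (biprod.inr : Y₂ ⟶ Y₁ ⊞ Y₂)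
        (biprod.snd : Y₁ ⊞ Y₂ ⟶ Y₂) (biprod.snd : X₁ ⊞ X₂ ⟶ X₂)]
    simp only [biprod.inl_fst, biprod.inl_snd, biprod.inr_fst, biprod.inr_snd,
      MonoidalPreadditive.whiskerLeft_zero, comp_zero, zero_comp,
      MonoidalPreadditive.zero_whiskerRight, add_zero, zero_add,
      MonoidalCategory.whiskerLeft_id, Category.comp_id, Category.id_comp]
    rw [ExactPairing.evaluation_coevaluation, ExactPairing.evaluation_coevaluation]
    trans (λ_ (X₁ ⊞ X₂)).hom ≫
      (biprod.fst ≫ biprod.inl + biprod.snd ≫ biprod.inr) ≫ (ρ_ (X₁ ⊞ X₂)).inv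
    · simp only [MonoidalCategory.whiskerRight_id, MonoidalCategory.id_whiskerLeft,
        Category.assoc, Iso.inv_hom_id_assoc, Iso.hom_inv_id_assoc,
        Preadditive.add_comp, Preadditive.comp_add]
    · rw [biprod.total]; simp

end PairSum2

/-! ### Transport of pairings along isomorphisms, and the zero pairing -/

section Congr

variable {C : Type*} [Category C] [MonoidalCategory C]

noncomputable def pairCongrLeft {Z Z' W : C} [ExactPairing Z W] (e : Z ≅ Z') :
    ExactPairing Z' W where
  coevaluation' := η_ Z W ≫ e.hom ▷ W
  evaluation' := W ◁ e.inv ≫ ε_ Z W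
  coevaluation_evaluation' := by
    simp only [MonoidalCategory.whiskerLeft_comp, comp_whiskerRight, Category.assoc]
    rw [associator_inv_naturality_middle_assoc, ← comp_whiskerRight_assoc,
      ← MonoidalCategory.whiskerLeft_comp, e.hom_inv_id]
    simp [ExactPairing.coevaluation_evaluation]
  evaluation_coevaluation' := by
    calc (η_ Z W ≫ e.hom ▷ W) ▷ Z' ≫ (α_ Z' W Z').hom ≫ Z' ◁ (W ◁ e.inv ≫ ε_ Z W)
        = 𝟙 _ ⊗≫ ((η_ Z W ≫ e.hom ▷ W) ▷ Z' ≫ ((Z' ⊗ W : C)) ◁ e.inv) ⊗≫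
            Z' ◁ ε_ Z W ⊗≫ 𝟙 _ := by
          monoidal
      _ = 𝟙 _ ⊗≫ (𝟙_ C ◁ e.inv ≫ (η_ Z W ≫ e.hom ▷ W) ▷ Z) ⊗≫ Z' ◁ ε_ Z W ⊗≫ 𝟙 _ := by
          rw [← whisker_exchange]
      _ = 𝟙 _ ⊗≫ 𝟙_ C ◁ e.inv ⊗≫ η_ Z W ▷ Z ⊗≫
            (e.hom ▷ ((W ⊗ Z : C)) ≫ Z' ◁ ε_ Z W) ⊗≫ 𝟙 _ := by
          monoidal
      _ = 𝟙 _ ⊗≫ 𝟙_ C ◁ e.inv ⊗≫ η_ Z W ▷ Z ⊗≫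
            (Z ◁ ε_ Z W ≫ e.hom ▷ 𝟙_ C) ⊗≫ 𝟙 _ := by
          rw [← whisker_exchange]
      _ = 𝟙 _ ⊗≫ 𝟙_ C ◁ e.inv ⊗≫
            (η_ Z W ▷ Z ≫ (α_ Z W Z).hom ≫ Z ◁ ε_ Z W) ⊗≫ e.hom ▷ 𝟙_ C ⊗≫ 𝟙 _ := by
          monoidal
      _ = 𝟙 _ ⊗≫ 𝟙_ C ◁ e.inv ⊗≫ ((λ_ Z).hom ≫ (ρ_ Z).inv) ⊗≫ e.hom ▷ 𝟙_ C ⊗≫ 𝟙 _ := by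
          rw [ExactPairing.evaluation_coevaluation]
      _ = (λ_ Z').hom ≫ (e.inv ≫ e.hom) ≫ (ρ_ Z').inv := by
          monoidal
      _ = (λ_ Z').hom ≫ (ρ_ Z').inv := by rw [e.inv_hom_id, Category.id_comp]

noncomputable def pairCongrRight {Z W W' : C} [ExactPairing Z W] (e : W ≅ W') :
    ExactPairing Z W' where
  coevaluation' := η_ Z W ≫ Z ◁ e.hom
  evaluation' := e.inv ▷ Z ≫ ε_ Z W
  evaluation_coevaluation' := by
    simp only [MonoidalCategory.whiskerLeft_comp, comp_whiskerRight, Category.assoc]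
    rw [associator_naturality_middle_assoc, ← MonoidalCategory.whiskerLeft_comp_assoc,
      ← comp_whiskerRight, e.hom_inv_id]
    simp [ExactPairing.evaluation_coevaluation]
  coevaluation_evaluation' := by
    calc W' ◁ (η_ Z W ≫ Z ◁ e.hom) ≫ (α_ W' Z W').inv ≫ (e.inv ▷ Z ≫ ε_ Z W) ▷ W'
        = 𝟙 _ ⊗≫ (W' ◁ (η_ Z W ≫ Z ◁ e.hom) ≫ e.inv ▷ ((Z ⊗ W' : C))) ⊗≫
            ε_ Z W ▷ W' ⊗≫ 𝟙 _ := by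
          monoidal
      _ = 𝟙 _ ⊗≫ (e.inv ▷ 𝟙_ C ≫ W ◁ (η_ Z W ≫ Z ◁ e.hom)) ⊗≫ ε_ Z W ▷ W' ⊗≫ 𝟙 _ := by
          rw [whisker_exchange]
      _ = 𝟙 _ ⊗≫ e.inv ▷ 𝟙_ C ⊗≫ W ◁ η_ Z W ⊗≫
            (((W ⊗ Z : C)) ◁ e.hom ≫ ε_ Z W ▷ W') ⊗≫ 𝟙 _ := by
          monoidal
      _ = 𝟙 _ ⊗≫ e.inv ▷ 𝟙_ C ⊗≫ W ◁ η_ Z W ⊗≫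
            (ε_ Z W ▷ W ≫ 𝟙_ C ◁ e.hom) ⊗≫ 𝟙 _ := by
          rw [whisker_exchange]
      _ = 𝟙 _ ⊗≫ e.inv ▷ 𝟙_ C ⊗≫
            (W ◁ η_ Z W ≫ (α_ W Z W).inv ≫ ε_ Z W ▷ W) ⊗≫ 𝟙_ C ◁ e.hom ⊗≫ 𝟙 _ := by
          monoidal
      _ = 𝟙 _ ⊗≫ e.inv ▷ 𝟙_ C ⊗≫ ((ρ_ W).hom ≫ (λ_ W).inv) ⊗≫ 𝟙_ C ◁ e.hom ⊗≫ 𝟙 _ := by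
          rw [ExactPairing.coevaluation_evaluation]
      _ = (ρ_ W').hom ≫ (e.inv ≫ e.hom) ≫ (λ_ W').inv := by
          monoidal
      _ = (ρ_ W').hom ≫ (λ_ W').inv := by rw [e.inv_hom_id, Category.id_comp]

end Congr

section ZeroPair

variable {C : Type*} [Category C] [MonoidalCategory C] [Preadditive C] [MonoidalPreadditive C]

noncomputable def pairOfIdZero {Z : C} (h : 𝟙 Z = 0) : ExactPairing Z Z where
  coevaluation' := 0
  evaluation' := 0
  coevaluation_evaluation' := by
    have : (ρ_ Z).hom ≫ (λ_ Z).inv = (ρ_ Z).hom ≫ 𝟙 Z ≫ (λ_ Z).inv := by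
      rw [Category.id_comp]
    rw [this, h]
    simp
  evaluation_coevaluation' := by
    have : (λ_ Z).hom ≫ (ρ_ Z).inv = (λ_ Z).hom ≫ 𝟙 Z ≫ (ρ_ Z).inv := by
      rw [Category.id_comp]
    rw [this, h]
    simp

end ZeroPair

/-! ### Lemmas on r-structures -/

section RStructLemmas

variable {C : Type*} [Category C] [MonoidalCategory C] (r : RStruct C)

theorem RStruct.homEquiv_coev (X : C) :
    r.homEquiv X (r.dual X) (r.coev X) = 𝟙 (r.dual X) :=
  (r.homEquiv X (r.dual X)).apply_symm_apply _

theorem RStruct.homEquiv_apply_coev {X Z : C} (f : r.dual X ⟶ Z) :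
    r.homEquiv X Z (r.coev X ≫ X ◁ f) = f := by
  rw [r.homEquiv_natural, r.homEquiv_coev, Category.id_comp]

theorem RStruct.homEquiv_symm_eq {X Z : C} (f : r.dual X ⟶ Z) :
    (r.homEquiv X Z).symm f = r.coev X ≫ X ◁ f := by
  apply (r.homEquiv X Z).injective
  rw [Equiv.apply_symm_apply, r.homEquiv_apply_coev]

/-- The canonical morphism `𝟙_C ⟶ codual Y ⊗ Y`. -/
noncomputable def RStruct.lcoev (Y : C) : 𝟙_ C ⟶ r.codual Y ⊗ Y :=
  (r.homEquiv' (r.codual Y) Y).symm (𝟙 (r.codual Y))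

theorem RStruct.homEquiv'_lcoev (Y : C) :
    r.homEquiv' (r.codual Y) Y (r.lcoev Y) = 𝟙 (r.codual Y) :=
  (r.homEquiv' (r.codual Y) Y).apply_symm_apply _

theorem RStruct.homEquiv'_apply_lcoev {Y Z : C} (h : r.codual Y ⟶ Z) :
    r.homEquiv' Z Y (r.lcoev Y ≫ h ▷ Y) = h := by
  rw [r.homEquiv'_natural, r.homEquiv'_lcoev, Category.id_comp]

theorem RStruct.homEquiv'_symm_eq {Y Z : C} (h : r.codual Y ⟶ Z) :
    (r.homEquiv' Z Y).symm h = r.lcoev Y ≫ h ▷ Y := by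
  apply (r.homEquiv' Z Y).injective
  rw [Equiv.apply_symm_apply, r.homEquiv'_apply_lcoev]

variable [Preadditive C] [MonoidalPreadditive C]

theorem RStruct.lcoev_ne_zero {Y : C} (h : 𝟙 (r.codual Y) ≠ 0) : r.lcoev Y ≠ 0 := by
  intro h0
  apply h
  have h1 : r.homEquiv' (r.codual Y) Y (r.lcoev Y ≫ (0 : r.codual Y ⟶ r.codual Y) ▷ Y) =
      (0 : r.codual Y ⟶ r.codual Y) := r.homEquiv'_apply_lcoev 0
  rw [MonoidalPreadditive.zero_whiskerRight, Limits.comp_zero, ← h0] at h1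
  rw [← r.homEquiv'_lcoev Y, h1]

theorem RStruct.coev_ne_zero {X : C} (h : 𝟙 (r.dual X) ≠ 0) : r.coev X ≠ 0 := by
  intro h0
  apply h
  have h1 : r.homEquiv X (r.dual X) (r.coev X ≫ X ◁ (0 : r.dual X ⟶ r.dual X)) =
      (0 : r.dual X ⟶ r.dual X) := r.homEquiv_apply_coev 0
  rw [MonoidalPreadditive.whiskerLeft_zero, Limits.comp_zero, ← h0] at h1
  rw [← r.homEquiv_coev X, h1]

theorem RStruct.id_codual_ne_zero {X : C} (h : 𝟙 X ≠ 0) : 𝟙 (r.codual X) ≠ 0 := by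
  intro h0
  apply h
  have hsub : ∀ u v : (r.codual X ⟶ r.codual X), u = v := by
    intro u v
    calc u = 𝟙 (r.codual X) ≫ u := (Category.id_comp u).symm
      _ = 0 := by rw [h0, Limits.zero_comp]
      _ = 𝟙 (r.codual X) ≫ v := by rw [h0, Limits.zero_comp]
      _ = v := Category.id_comp v
  have hsub2 : ∀ u v : (𝟙_ C ⟶ r.codual X ⊗ X), u = v := fun u v =>
    (r.homEquiv' (r.codual X) X).injective (hsub _ _)
  have hsub3 : ∀ u v : (r.dual (r.codual X) ⟶ X), u = v := fun u v => by
    rw [← (r.homEquiv (r.codual X) X).apply_symm_apply u,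
      ← (r.homEquiv (r.codual X) X).apply_symm_apply v, hsub2 ((r.homEquiv _ X).symm u)]
  have e : r.dual (r.codual X) = X := r.dual_codual X
  have := hsub3 (eqToHom e ≫ 𝟙 X) (eqToHom e ≫ 0)
  rwa [cancel_epi (eqToHom e)] at this

theorem RStruct.id_dual_ne_zero {X : C} (h : 𝟙 X ≠ 0) : 𝟙 (r.dual X) ≠ 0 := by
  intro h0
  apply h
  have hsub : ∀ u v : (r.dual X ⟶ r.dual X), u = v := by
    intro u v
    calc u = 𝟙 (r.dual X) ≫ u := (Category.id_comp u).symm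
      _ = 0 := by rw [h0, Limits.zero_comp]
      _ = 𝟙 (r.dual X) ≫ v := by rw [h0, Limits.zero_comp]
      _ = v := Category.id_comp v
  have hsub2 : ∀ u v : (𝟙_ C ⟶ X ⊗ r.dual X), u = v := fun u v =>
    (r.homEquiv X (r.dual X)).injective (hsub _ _)
  have hsub3 : ∀ u v : (r.codual (r.dual X) ⟶ X), u = v := fun u v => by
    rw [← (r.homEquiv' X (r.dual X)).apply_symm_apply u,
      ← (r.homEquiv' X (r.dual X)).apply_symm_apply v, hsub2 ((r.homEquiv' X _).symm u)]
  have e : r.codual (r.dual X) = X := r.codual_dual X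
  have := hsub3 (eqToHom e ≫ 𝟙 X) (eqToHom e ≫ 0)
  rwa [cancel_epi (eqToHom e)] at this

end RStructLemmas

/-! ### Simplicity via scalars -/

section Scal

variable {k : Type*} [Field k]
variable {C : Type*} [Category C] [Preadditive C] [Linear k C]

theorem simple_of_scal {Z : C} (h1 : 𝟙 Z ≠ 0) (h2 : ∀ f : Z ⟶ Z, ∃ a : k, f = a • 𝟙 Z)
    (hss : ∀ ⦃W W' : C⦄ (f : W ⟶ W'), Mono f → IsSplitMono f) : Simple Z := by
  have smul_cancel : ∀ b : k, b • 𝟙 Z = 0 → b = 0 := by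
    intro b hb
    by_contra hb0
    apply h1
    calc 𝟙 Z = b⁻¹ • b • 𝟙 Z := by rw [smul_smul, inv_mul_cancel₀ hb0, one_smul]
      _ = 0 := by rw [hb, smul_zero]
  constructor
  intro W f m
  constructor
  · intro hiso hf0
    apply h1
    have h3 : inv f ≫ f = inv f ≫ (0 : W ⟶ Z) := congrArg (fun g => inv f ≫ g) hf0
    rw [IsIso.inv_hom_id, Limits.comp_zero] at h3
    exact h3
  · intro hf0
    haveI : IsSplitMono f := hss f m
    have hfr : f ≫ retraction f = 𝟙 W := IsSplitMono.id f
    obtain ⟨a, ha⟩ := h2 (retraction f ≫ f)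
    have hid : (retraction f ≫ f) ≫ (retraction f ≫ f) = retraction f ≫ f := by
      slice_lhs 2 3 => rw [hfr]
      simp
    have ha2 : (a * a - a) • 𝟙 Z = 0 := by
      have : (a • 𝟙 Z) ≫ (a • 𝟙 Z) = a • 𝟙 Z := by rw [← ha, hid, ha]
      rw [Linear.smul_comp, Linear.comp_smul, smul_smul, Category.comp_id] at this
      rw [sub_smul, this, sub_self]
    have haa : a * (a - 1) = 0 := by
      have := smul_cancel _ ha2
      ring_nf
      ring_nf at this
      linear_combination this
    rcases mul_eq_zero.mp haa with h | h
    · exfalso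
      apply hf0
      have hz : retraction f ≫ f = 0 := by rw [ha, h, zero_smul]
      calc f = (f ≫ retraction f) ≫ f := by rw [hfr, Category.id_comp]
        _ = f ≫ retraction f ≫ f := by rw [Category.assoc]
        _ = 0 := by rw [hz, Limits.comp_zero]
    · have h1' : retraction f ≫ f = 𝟙 Z := by
        rw [ha, sub_eq_zero.mp h, one_smul]
      exact ⟨⟨retraction f, hfr, h1'⟩⟩

end Scal

/-! ### The dual of a simple object is simple -/

section ScalTransfer

variable {k : Type*} [Field k] [IsAlgClosed k]
variable {C : Type*} [Category C] [Abelian C] [Linear k C] [MonoidalCategory C]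
  [MonoidalPreadditive C] [MonoidalLinear k C]

theorem simple_dual (r : RStruct C) (hfd : ∀ X Y : C, FiniteDimensional k (X ⟶ Y))
    (hss : ∀ ⦃W W' : C⦄ (f : W ⟶ W'), Mono f → IsSplitMono f)
    (X : C) (hX : Simple X) : Simple (r.dual X) := by
  haveI := hX
  haveI := hfd X X
  have hN0 : 𝟙 (r.dual X) ≠ 0 := r.id_dual_ne_zero (id_nonzero X)
  have e : r.codual (r.dual X) = X := r.codual_dual X
  let u₀ : 𝟙_ C ⟶ X ⊗ r.dual X := (r.homEquiv' X (r.dual X)).symm (eqToHom e)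
  let f₀ : r.dual X ⟶ r.dual X := r.homEquiv X (r.dual X) u₀
  have key : ∀ f : r.dual X ⟶ r.dual X, ∃ a : k, f = a • f₀ := by
    intro f
    obtain ⟨a, ha⟩ := endomorphism_simple_eq_smul_id k
      (eqToHom e.symm ≫ r.homEquiv' X (r.dual X) ((r.homEquiv X (r.dual X)).symm f))
    refine ⟨a, ?_⟩
    have hga : r.homEquiv' X (r.dual X) ((r.homEquiv X (r.dual X)).symm f) =
        a • eqToHom e := by
      calc r.homEquiv' X (r.dual X) ((r.homEquiv X (r.dual X)).symm f)
          = eqToHom e ≫ eqToHom e.symm ≫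
            r.homEquiv' X (r.dual X) ((r.homEquiv X (r.dual X)).symm f) := by simp
        _ = eqToHom e ≫ ((a : k) • 𝟙 X) := congrArg (fun t => eqToHom e ≫ t) ha.symm
        _ = a • eqToHom e := by rw [Linear.comp_smul, Category.comp_id]
    have hua : (r.homEquiv X (r.dual X)).symm f = a • u₀ := by
      rw [show (r.homEquiv X (r.dual X)).symm f
          = (r.homEquiv' X (r.dual X)).symm
              (r.homEquiv' X (r.dual X) ((r.homEquiv X (r.dual X)).symm f)) from
        (Equiv.symm_apply_apply _ _).symm, hga,
        r.homEquiv'_symm_eq, MonoidalLinear.smul_whiskerRight, Linear.comp_smul]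
      rw [show u₀ = (r.homEquiv' X (r.dual X)).symm (eqToHom e) from rfl,
        r.homEquiv'_symm_eq]
    have hs : (r.homEquiv X (r.dual X)).symm (a • f₀) = a • u₀ := by
      rw [r.homEquiv_symm_eq, MonoidalLinear.whiskerLeft_smul, Linear.comp_smul]
      rw [show f₀ = r.homEquiv X (r.dual X) u₀ from rfl, ← r.homEquiv_symm_eq,
        Equiv.symm_apply_apply]
    calc f = r.homEquiv X (r.dual X) ((r.homEquiv X (r.dual X)).symm f) :=
          (Equiv.apply_symm_apply _ _).symm
      _ = r.homEquiv X (r.dual X) ((r.homEquiv X (r.dual X)).symm (a • f₀)) := by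
          rw [hs, hua]
      _ = a • f₀ := Equiv.apply_symm_apply _ _
  obtain ⟨a₀, ha₀⟩ := key (𝟙 (r.dual X))
  have ha₀0 : a₀ ≠ 0 := by
    intro h
    apply hN0
    rw [ha₀, h, zero_smul]
  apply simple_of_scal (k := k) hN0 ?_ hss
  intro f
  obtain ⟨a, ha⟩ := key f
  refine ⟨a * a₀⁻¹, ?_⟩
  rw [ha, ha₀, smul_smul, mul_assoc, inv_mul_cancel₀ ha₀0, mul_one]

end ScalTransfer

/-! ### Splitting non-simple objects -/

section Split

open Limits

variable {C : Type*} [Category C] [Abelian C]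

theorem split_of_nonsimple (hss : ∀ ⦃W W' : C⦄ (f : W ⟶ W'), Mono f → IsSplitMono f)
    (X : C) (h0 : 𝟙 X ≠ 0) (hs : ¬ Simple X) :
    ∃ (W Z : C) (_ : X ≅ W ⊞ Z), 𝟙 W ≠ 0 ∧ 𝟙 Z ≠ 0 := by
  have hnot : ¬ ∀ (W : C) (f : W ⟶ X) (_ : Mono f), IsIso f ↔ f ≠ 0 := by
    intro h
    exact hs ⟨fun {W} f m => h W f m⟩
  push_neg at hnot
  obtain ⟨W, f, m, hiff⟩ := hnot
  haveI := m
  have hf : f ≠ 0 ∧ ¬ IsIso f := by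
    rcases hiff with ⟨hIso, hf0⟩ | ⟨hni, hne⟩
    · exfalso
      apply h0
      haveI := hIso
      have h3 : inv f ≫ f = inv f ≫ (0 : W ⟶ X) := congrArg (fun g => inv f ≫ g) hf0
      rwa [IsIso.inv_hom_id, Limits.comp_zero] at h3
    · exact ⟨hne, hni⟩
  obtain ⟨hf0, hfiso⟩ := hf
  haveI : IsSplitMono f := hss f m
  have hfr : f ≫ retraction f = 𝟙 W := IsSplitMono.id f
  have hfu : f ≫ (𝟙 X - retraction f ≫ f) = 0 := by
    rw [Preadditive.comp_sub, Category.comp_id, ← Category.assoc, hfr, Category.id_comp,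
      sub_self]
  have hπw : cokernel.π f ≫ cokernel.desc f (𝟙 X - retraction f ≫ f) hfu =
      𝟙 X - retraction f ≫ f := cokernel.π_desc _ _ _
  have hwrf : cokernel.desc f (𝟙 X - retraction f ≫ f) hfu ≫ retraction f = 0 := by
    rw [← cancel_epi (cokernel.π f), ← Category.assoc, hπw, Preadditive.sub_comp,
      Category.id_comp, Category.assoc, hfr, Category.comp_id, sub_self, Limits.comp_zero]
  have hwπ : cokernel.desc f (𝟙 X - retraction f ≫ f) hfu ≫ cokernel.π f = 𝟙 (cokernel f) := by
    rw [← cancel_epi (cokernel.π f), ← Category.assoc, hπw, Preadditive.sub_comp,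
      Category.id_comp, Category.assoc, cokernel.condition, Limits.comp_zero, sub_zero,
      Category.comp_id]
  refine ⟨W, cokernel f, ?_, ?_, ?_⟩
  · refine ⟨biprod.lift (retraction f) (cokernel.π f),
      biprod.desc f (cokernel.desc f (𝟙 X - retraction f ≫ f) hfu), ?_, ?_⟩
    · rw [biprod.lift_desc, hπw]
      exact add_sub_cancel _ _
    · apply biprod.hom_ext'
      · rw [biprod.inl_desc_assoc, Category.comp_id]
        apply biprod.hom_ext
        · rw [Category.assoc, biprod.lift_fst, hfr, biprod.inl_fst]
        · rw [Category.assoc, biprod.lift_snd, cokernel.condition, biprod.inl_snd]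
      · rw [biprod.inr_desc_assoc, Category.comp_id]
        apply biprod.hom_ext
        · rw [Category.assoc, biprod.lift_fst, hwrf, biprod.inr_fst]
        · rw [Category.assoc, biprod.lift_snd, hwπ, biprod.inr_snd]
  · intro h
    apply hf0
    rw [← Category.id_comp f, h, Limits.zero_comp]
  · intro h
    apply hfiso
    have hπ0 : cokernel.π f = 0 := by
      rw [← Category.comp_id (cokernel.π f), h, Limits.comp_zero]
    have : 𝟙 X - retraction f ≫ f = 0 := by
      rw [← hπw, hπ0, Limits.zero_comp]
    have hrf : retraction f ≫ f = 𝟙 X := by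
      have := sub_eq_zero.mp this
      exact this.symm
    exact ⟨⟨retraction f, hfr, hrf⟩⟩

end Split

/-! ### Rank bookkeeping -/

section Rank

open Limits Module

variable {k : Type*} [Field k]
variable {C : Type*} [Category C] [Preadditive C] [Linear k C]

noncomputable def endCongr {X X' : C} (e : X ≅ X') : (X ⟶ X) ≃ₗ[k] (X' ⟶ X') where
  toFun f := e.inv ≫ f ≫ e.hom
  invFun g := e.hom ≫ g ≫ e.inv
  map_add' f g := by simp [Preadditive.comp_add, Preadditive.add_comp]
  map_smul' a f := by simp [Linear.comp_smul, Linear.smul_comp]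
  left_inv f := by simp
  right_inv g := by simp

variable [HasBinaryBiproducts C]

noncomputable def biprodEndHom (W Z : C) : ((W ⟶ W) × (Z ⟶ Z)) →ₗ[k] (W ⊞ Z ⟶ W ⊞ Z) where
  toFun p := biprod.map p.1 p.2
  map_add' p q := by
    apply biprod.hom_ext
    · simp [Preadditive.add_comp, Preadditive.comp_add]
    · simp [Preadditive.add_comp, Preadditive.comp_add]
  map_smul' a p := by
    apply biprod.hom_ext
    · simp [Linear.smul_comp, Linear.comp_smul]
    · simp [Linear.smul_comp, Linear.comp_smul]

theorem biprodEndHom_inj (W Z : C) : Function.Injective (biprodEndHom (k := k) W Z) := by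
  intro p q h
  have h1 := congrArg (fun t => biprod.inl ≫ t ≫ biprod.fst) h
  have h2 := congrArg (fun t => biprod.inr ≫ t ≫ biprod.snd) h
  simp only [biprodEndHom, LinearMap.coe_mk, AddHom.coe_mk, biprod.inl_map_assoc,
    biprod.inr_map_assoc, biprod.inl_fst, biprod.inr_snd, Category.comp_id] at h1 h2
  exact Prod.ext h1 h2

theorem finrank_biprod_le (W Z : C) [FiniteDimensional k (W ⟶ W)]
    [FiniteDimensional k (Z ⟶ Z)] [FiniteDimensional k (W ⊞ Z ⟶ W ⊞ Z)] :
    finrank k (W ⟶ W) + finrank k (Z ⟶ Z) ≤ finrank k (W ⊞ Z ⟶ W ⊞ Z) := by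
  have := LinearMap.finrank_le_finrank_of_injective (biprodEndHom_inj (k := k) W Z)
  rwa [Module.finrank_prod] at this

theorem one_le_finrank_end {X : C} [FiniteDimensional k (X ⟶ X)] (h : 𝟙 X ≠ 0) :
    1 ≤ finrank k (X ⟶ X) := by
  haveI : Nontrivial (X ⟶ X) := nontrivial_of_ne _ _ h
  exact Module.finrank_pos

end Rank

/-- Let `Γ` be a finite group and `C = ⊕_{γ∈Γ} C_γ` a `Γ`-graded weakly fusion category
(grading predicate `P`, with `C_{γ₁} ⊗ C_{γ₂} ⊆ C_{γ₁γ₂}`, unit in `C_1`, weak duals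
respecting the grading, and every simple object homogeneous) such that the identity component
`C_1` is rigid.  Then `C` is rigid (every object has both a rigid left and right dual), hence
a fusion category. -/
theorem graded_weakly_fusion_rigid {k : Type*} [Field k] [IsAlgClosed k]
    {C : Type*} [Category C] [Abelian C] [Linear k C] [MonoidalCategory C]
    [MonoidalPreadditive C] [MonoidalLinear k C]
    {Γ : Type*} [Group Γ] [Finite Γ]
    (r : RStruct C)
    (hunit : Simple (𝟙_ C))
    (hfd : ∀ X Y : C, FiniteDimensional k (X ⟶ Y))
    (hss : ∀ ⦃Z W : C⦄ (f : Z ⟶ W), Mono f → IsSplitMono f)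
    (P : Γ → C → Prop)
    (hPunit : P 1 (𝟙_ C))
    (hPmul : ∀ {g h : Γ} {X Y : C}, P g X → P h Y → P (g * h) (X ⊗ Y))
    (hPdual : ∀ {g : Γ} {X : C}, P g X → P g⁻¹ (r.codual X))
    (hgrade : ∀ X : C, Simple X → ∃ γ : Γ, P γ X)
    (hrigid₁ : ∀ X : C, P 1 X →
      (∃ Y : C, Nonempty (ExactPairing X Y)) ∧ (∃ Y : C, Nonempty (ExactPairing Y X))) :
    ∀ X : C, (∃ Y : C, Nonempty (ExactPairing X Y)) ∧
      (∃ Y : C, Nonempty (ExactPairing Y X)) := by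
  haveI := hunit
  have mono_of_ne : ∀ {M : C} (c : 𝟙_ C ⟶ M), c ≠ 0 → Mono c := by
    intro M c hc
    exact Preadditive.mono_of_kernel_zero (kernel_zero_of_nonzero_from_simple hc)
  have hsimple : ∀ X : C, Simple X →
      (∃ Y : C, Nonempty (ExactPairing X Y)) ∧ (∃ Y : C, Nonempty (ExactPairing Y X)) := by
    intro X hX
    haveI := hX
    constructor
    · haveI hN := simple_dual r hfd hss X hX
      obtain ⟨δ, hδ⟩ := hgrade _ hN
      have hX' : P δ⁻¹ X := by
        have := hPdual hδ
        rwa [r.codual_dual X] at this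
      have hA : P 1 (r.dual X ⊗ X) := by
        have := hPmul hδ hX'
        simpa using this
      obtain ⟨G, ⟨EG⟩⟩ := (hrigid₁ _ hA).1
      have hc : r.coev X ≠ 0 := r.coev_ne_zero (r.id_dual_ne_zero (id_nonzero X))
      haveI : Mono (r.coev X) := mono_of_ne _ hc
      haveI : IsSplitMono (r.coev X) := hss _ this
      exact wfr_core_right EG (r.coev X) (retraction (r.coev X)) (IsSplitMono.id _)
    · obtain ⟨γ, hγ⟩ := hgrade X hX
      have hB := hPdual hγ
      have hA : P 1 (X ⊗ r.codual X) := by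
        have := hPmul hγ hB
        simpa using this
      obtain ⟨G, ⟨EG⟩⟩ := (hrigid₁ _ hA).2
      have hc : r.lcoev X ≠ 0 := r.lcoev_ne_zero (r.id_codual_ne_zero (id_nonzero X))
      haveI : Mono (r.lcoev X) := mono_of_ne _ hc
      haveI : IsSplitMono (r.lcoev X) := hss _ this
      exact wfr_core_left EG (r.lcoev X) (retraction (r.lcoev X)) (IsSplitMono.id _)
  have main : ∀ (n : ℕ) (X : C), Module.finrank k (X ⟶ X) ≤ n →
      (∃ Y : C, Nonempty (ExactPairing X Y)) ∧ (∃ Y : C, Nonempty (ExactPairing Y X)) := by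
    intro n
    induction n with
    | zero =>
      intro X hX
      haveI := hfd X X
      have h0 : 𝟙 X = 0 := by
        haveI : Subsingleton (X ⟶ X) :=
          Module.finrank_zero_iff.mp (Nat.le_zero.mp hX)
        exact Subsingleton.elim _ _
      exact ⟨⟨X, ⟨pairOfIdZero h0⟩⟩, ⟨X, ⟨pairOfIdZero h0⟩⟩⟩
    | succ n ih =>
      intro X hX
      by_cases h0 : 𝟙 X = 0
      · exact ⟨⟨X, ⟨pairOfIdZero h0⟩⟩, ⟨X, ⟨pairOfIdZero h0⟩⟩⟩
      by_cases hsimp : Simple X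
      · exact hsimple X hsimp
      obtain ⟨W, Z, e, hW, hZ⟩ := split_of_nonsimple hss X h0 hsimp
      haveI := hfd W W; haveI := hfd Z Z
      haveI := hfd (W ⊞ Z) (W ⊞ Z); haveI := hfd X X
      have heq : Module.finrank k (X ⟶ X) = Module.finrank k (W ⊞ Z ⟶ W ⊞ Z) :=
        (endCongr (k := k) e).finrank_eq
      have hsum := finrank_biprod_le (k := k) W Z
      have h1W := one_le_finrank_end (k := k) hW
      have h1Z := one_le_finrank_end (k := k) hZ
      have hWn : Module.finrank k (W ⟶ W) ≤ n := by omega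
      have hZn : Module.finrank k (Z ⟶ Z) ≤ n := by omega
      obtain ⟨⟨Y1, ⟨p1⟩⟩, ⟨Y2, ⟨p2⟩⟩⟩ := ih W hWn
      obtain ⟨⟨Y3, ⟨p3⟩⟩, ⟨Y4, ⟨p4⟩⟩⟩ := ih Z hZn
      constructor
      · refine ⟨Y1 ⊞ Y3, ⟨?_⟩⟩
        haveI := p1; haveI := p3
        haveI := pairSum W Y1 Z Y3
        exact pairCongrLeft e.symm
      · refine ⟨Y2 ⊞ Y4, ⟨?_⟩⟩
        haveI := p2; haveI := p4
        haveI := pairSum Y2 W Y4 Z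
        exact pairCongrRight e.symm
  intro X
  haveI := hfd X X
  exact main (Module.finrank k (X ⟶ X)) X le_rfl
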